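/- Let $m > 1$ be an integer. Then the following four sums are all equal to $2^{2m-1} - 2^m - \tfrac{1}{2}\binom{2m}{m} - \sum_{t=1}^{\lfloor m/2 \rfloor} \binom{m}{2t}\binom{m}{t} + 1$: (a) $\sum_{h/k:\, 0/1 < h/k < 1/3} \sum_{s=1}^{\lfloor m/(k-h) \rfloor} \binom{m}{s(k-h)}\left(\binom{m}{s h} + \binom{m}{s(k-2h)}\right)$; (b) $\sum_{h/k:\, 1/3 < h/k < 1/2} \sum_{s=1}^{\lfloor m/(k-h) \rfloor} \binom{m}{s(k-h)}\left(\binom{m}{s h} + \binom{m}{s(k-2h)}\right)$; (c) $\sum_{h/k:\, 1/2 < h/k < 2/3} \sum_{s=1}^{\lfloor m/h \rfloor} \binom{m}{s h}\left(\binom{m}{s(k-h)} + \binom{m}{s(2h-k)}\right)$; (d) $\sum_{h/k:\, 2/3 < h/k < 1/1} \sum_{s=1}^{\lfloor m/h \rfloor} \binom{m}{s h}\left(\binom{m}{s(k-h)} + \binom{m}{s(2h-k)}\right)$; where each outer sum ranges over all reduced fractions $h/k \in \mathcal{F}(\mathbb{B}(2m),m)$ in the indicated open interval. -/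
import Mathlib

open Finset

private lemma coprime_sub (h k : ℕ) (hc : Nat.Coprime h k) (hle : h ≤ k) :
    Nat.Coprime h (k - h) := by
  have : k = (k - h) + h := by omega
  rw [this, Nat.Coprime, Nat.gcd_add_self_right] at hc
  exact hc

private lemma farey_core (m : ℕ) (Q : ℕ → ℕ → Prop) [DecidablePred fun q : ℕ × ℕ => Q q.1 q.2]
    [DecidablePred fun p : ℕ × ℕ => Q p.1 (p.2 - p.1)]
    (hscale : ∀ s h d, 0 < s → (Q (s * h) (s * d) ↔ Q h d))
    (u : ℕ × ℕ → ℕ) (hu : u = Prod.fst ∨ u = Prod.snd)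
    (humax : ∀ h d, Q h d → u (h, d) = max h d)
    (f : ℕ → ℕ → ℕ) :
    ∑ p ∈ ((Icc 1 (2*m)) ×ˢ (Icc 1 (2*m))).filter
        (fun p => Q p.1 (p.2 - p.1) ∧ p.1 < p.2 ∧ Nat.Coprime p.1 p.2 ∧ p.1 ≤ m ∧ p.2 - p.1 ≤ m),
      ∑ s ∈ Icc 1 (m / u (p.1, p.2 - p.1)), f (s * p.1) (s * (p.2 - p.1))
    = ∑ q ∈ ((Icc 1 m) ×ˢ (Icc 1 m)).filter (fun q => Q q.1 q.2), f q.1 q.2 := by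
  have huscale : ∀ s h d : ℕ, u (s * h, s * d) = s * u (h, d) := by
    rcases hu with rfl | rfl <;> intro s h d <;> rfl
  rw [Finset.sum_sigma']
  refine Finset.sum_nbij' (fun x => (x.2 * x.1.1, x.2 * (x.1.2 - x.1.1)))
    (fun q => ⟨(q.1 / Nat.gcd q.1 q.2, q.1 / Nat.gcd q.1 q.2 + q.2 / Nat.gcd q.1 q.2),
      Nat.gcd q.1 q.2⟩) ?_ ?_ ?_ ?_ (fun a _ => rfl)
  · -- forward membership
    rintro ⟨⟨h, k⟩, s⟩ hx
    simp only [mem_sigma, mem_filter, mem_product, mem_Icc] at hx ⊢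
    obtain ⟨⟨⟨⟨h1, h2m⟩, k1, k2m⟩, hQ, hlt, hcop, hhm, hdm⟩, hs1, hsu⟩ := hx
    have hd1 : 1 ≤ k - h := by omega
    have humax' := humax h (k - h) hQ
    have hupos : 0 < u (h, k - h) := by omega
    have hsle : s * u (h, k - h) ≤ m := by
      rw [Nat.le_div_iff_mul_le hupos] at hsu; exact hsu
    have hsh : s * h ≤ m := le_trans (by nlinarith [le_max_left h (k-h)]) hsle
    have hsd : s * (k - h) ≤ m := le_trans (by nlinarith [le_max_right h (k-h)]) hsle
    refine ⟨⟨⟨?_, hsh⟩, ?_, hsd⟩, ?_⟩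
    · nlinarith
    · nlinarith
    · exact (hscale s h (k - h) (by omega)).2 hQ
  · -- backward membership
    rintro ⟨a, b⟩ hq
    simp only [mem_filter, mem_product, mem_Icc, mem_sigma, mem_Icc] at hq ⊢
    obtain ⟨⟨⟨ha1, ham⟩, hb1, hbm⟩, hQ⟩ := hq
    set g := Nat.gcd a b with hg
    have hgpos : 0 < g := Nat.gcd_pos_of_pos_left _ (by omega)
    have hda : g ∣ a := Nat.gcd_dvd_left a b
    have hdb : g ∣ b := Nat.gcd_dvd_right a b
    have hha : g * (a / g) = a := Nat.mul_div_cancel' hda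
    have hhb : g * (b / g) = b := Nat.mul_div_cancel' hdb
    have hapos : 0 < a / g := Nat.div_pos (Nat.le_of_dvd (by omega) hda) hgpos
    have hbpos : 0 < b / g := Nat.div_pos (Nat.le_of_dvd (by omega) hdb) hgpos
    have haled : a / g ≤ a := Nat.div_le_self a g
    have hbled : b / g ≤ b := Nat.div_le_self b g
    have hQ' : Q (a / g) (b / g) := by
      have := (hscale g (a / g) (b / g) hgpos)
      rw [hha, hhb] at this
      exact this.1 hQ
    have hcop' : Nat.Coprime (a / g) (b / g) := Nat.coprime_div_gcd_div_gcd hgpos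
    have hsub : a / g + b / g - a / g = b / g := by omega
    refine ⟨⟨⟨⟨by omega, by omega⟩, by omega, by omega⟩, ?_, by omega, ?_, by omega, by omega⟩,
      by omega, ?_⟩
    · rw [hsub]; exact hQ'
    · simpa using hcop'
    · rw [hsub]
      have hupos : 0 < u (a / g, b / g) := by
        rw [humax _ _ hQ']; omega
      rw [Nat.le_div_iff_mul_le hupos, ← huscale, hha, hhb]
      rcases hu with rfl | rfl
      · exact ham
      · exact hbm
  · -- left inverse
    rintro ⟨⟨h, k⟩, s⟩ hx
    simp only [mem_sigma, mem_filter, mem_product, mem_Icc] at hx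
    obtain ⟨⟨⟨⟨h1, h2m⟩, k1, k2m⟩, hQ, hlt, hcop, hhm, hdm⟩, hs1, hsu⟩ := hx
    have hcd : Nat.Coprime h (k - h) := coprime_sub h k hcop (by omega)
    have hg : Nat.gcd (s * h) (s * (k - h)) = s := by
      rw [Nat.gcd_mul_left, hcd, mul_one]
    have e1 : s * h / s = h := Nat.mul_div_cancel_left h (by omega)
    have e2 : s * (k - h) / s = k - h := Nat.mul_div_cancel_left _ (by omega)
    have e3 : h + (k - h) = k := by omega
    dsimp only
    rw [hg, e1, e2, e3]
  · -- right inverse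
    rintro ⟨a, b⟩ hq
    simp only [mem_filter, mem_product, mem_Icc] at hq
    obtain ⟨⟨⟨ha1, ham⟩, hb1, hbm⟩, hQ⟩ := hq
    have hda : Nat.gcd a b ∣ a := Nat.gcd_dvd_left a b
    have hdb : Nat.gcd a b ∣ b := Nat.gcd_dvd_right a b
    have hsub : a / Nat.gcd a b + b / Nat.gcd a b - a / Nat.gcd a b = b / Nat.gcd a b :=
      Nat.add_sub_cancel_left _ _
    dsimp only
    rw [hsub, Nat.mul_div_cancel' hda, Nat.mul_div_cancel' hdb]

-- generic swap over the symmetric product set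
private lemma swap_sum (m : ℕ) (Q : ℕ → ℕ → Prop) [DecidablePred fun q : ℕ × ℕ => Q q.1 q.2]
    [DecidablePred fun q : ℕ × ℕ => Q q.2 q.1] (f : ℕ → ℕ → ℕ) :
    ∑ q ∈ ((Icc 1 m) ×ˢ (Icc 1 m)).filter (fun q => Q q.1 q.2), f q.1 q.2
    = ∑ q ∈ ((Icc 1 m) ×ˢ (Icc 1 m)).filter (fun q => Q q.2 q.1), f q.2 q.1 := by
  refine Finset.sum_nbij' Prod.swap Prod.swap ?_ ?_ ?_ ?_ ?_ <;>
    rintro ⟨a, b⟩ hq <;>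
    simp only [mem_filter, mem_product, mem_Icc, Prod.swap_prod_mk] at hq ⊢ <;> tauto

private lemma Sb_eq_Sa (m : ℕ) :
    ∑ q ∈ ((Icc 1 m) ×ˢ (Icc 1 m)).filter (fun q => q.1 < q.2 ∧ q.2 < 2 * q.1),
      m.choose q.2 * (m.choose q.1 + m.choose (q.2 - q.1))
    = ∑ q ∈ ((Icc 1 m) ×ˢ (Icc 1 m)).filter (fun q => 2 * q.1 < q.2),
      m.choose q.2 * (m.choose q.1 + m.choose (q.2 - q.1)) := by
  refine Finset.sum_nbij' (fun q => (q.2 - q.1, q.2)) (fun q => (q.2 - q.1, q.2))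
    ?_ ?_ ?_ ?_ ?_
  · rintro ⟨a, b⟩ hq
    simp only [mem_filter, mem_product, mem_Icc, Prod.fst, Prod.snd] at hq ⊢
    omega
  · rintro ⟨a, b⟩ hq
    simp only [mem_filter, mem_product, mem_Icc, Prod.fst, Prod.snd] at hq ⊢
    omega
  · rintro ⟨a, b⟩ hq
    simp only [mem_filter, mem_product, mem_Icc] at hq
    dsimp only
    rw [show b - (b - a) = a by omega]
  · rintro ⟨a, b⟩ hq
    simp only [mem_filter, mem_product, mem_Icc] at hq
    dsimp only
    rw [show b - (b - a) = a by omega]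
  · rintro ⟨a, b⟩ hq
    simp only [mem_filter, mem_product, mem_Icc] at hq
    dsimp only
    rw [show b - (b - a) = a by omega]
    ring

private lemma diag_sum (m : ℕ) :
    ∑ q ∈ ((Icc 1 m) ×ˢ (Icc 1 m)).filter (fun q => q.2 = 2 * q.1),
      m.choose q.2 * (m.choose q.1 + m.choose (q.2 - q.1))
    = 2 * ∑ t ∈ Icc 1 (m / 2), m.choose (2 * t) * m.choose t := by
  rw [Finset.mul_sum]
  refine Finset.sum_nbij' (fun q => q.1) (fun t => (t, 2 * t)) ?_ ?_ ?_ ?_ ?_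
  · rintro ⟨a, b⟩ hq
    simp only [mem_filter, mem_product, mem_Icc, mem_Icc] at hq ⊢
    omega
  · intro t ht
    simp only [mem_Icc] at ht
    simp only [mem_filter, mem_product, mem_Icc]
    refine ⟨⟨⟨by omega, by omega⟩, by omega, by omega⟩, trivial⟩
  · rintro ⟨a, b⟩ hq
    simp only [mem_filter, mem_product, mem_Icc] at hq
    dsimp only
    rw [show b = 2 * a by omega]
  · intro t ht
    rfl
  · rintro ⟨a, b⟩ hq
    simp only [mem_filter, mem_product, mem_Icc] at hq
    obtain ⟨-, rfl⟩ := hq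
    have e1 : 2 * a - a = a := by omega
    rw [e1]; ring

private lemma split_sum (m : ℕ) :
    ∑ q ∈ ((Icc 1 m) ×ˢ (Icc 1 m)).filter (fun q => 2 * q.1 < q.2),
      m.choose q.2 * (m.choose q.1 + m.choose (q.2 - q.1))
    + ∑ q ∈ ((Icc 1 m) ×ˢ (Icc 1 m)).filter (fun q => q.1 < q.2 ∧ q.2 < 2 * q.1),
      m.choose q.2 * (m.choose q.1 + m.choose (q.2 - q.1))
    + ∑ q ∈ ((Icc 1 m) ×ˢ (Icc 1 m)).filter (fun q => q.2 = 2 * q.1),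
      m.choose q.2 * (m.choose q.1 + m.choose (q.2 - q.1))
    = ∑ q ∈ ((Icc 1 m) ×ˢ (Icc 1 m)).filter (fun q => q.1 < q.2),
      m.choose q.2 * (m.choose q.1 + m.choose (q.2 - q.1)) := by
  rw [← Finset.sum_filter_add_sum_filter_not (((Icc 1 m) ×ˢ (Icc 1 m)).filter
      (fun q => q.1 < q.2)) (fun q => 2 * q.1 < q.2)]
  rw [← Finset.sum_filter_add_sum_filter_not ((((Icc 1 m) ×ˢ (Icc 1 m)).filter
      (fun q => q.1 < q.2)).filter (fun q => ¬ 2 * q.1 < q.2)) (fun q => q.2 = 2 * q.1)]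
  have e1 : (((Icc 1 m) ×ˢ (Icc 1 m)).filter (fun q => q.1 < q.2)).filter
      (fun q => 2 * q.1 < q.2) = ((Icc 1 m) ×ˢ (Icc 1 m)).filter (fun q => 2 * q.1 < q.2) := by
    rw [Finset.filter_filter]
    apply Finset.filter_congr
    intro q hq
    simp only [mem_product, mem_Icc] at hq
    constructor <;> intro h <;> [exact h.2; exact ⟨by omega, h⟩]
  have e2 : ((((Icc 1 m) ×ˢ (Icc 1 m)).filter (fun q => q.1 < q.2)).filter
      (fun q => ¬ 2 * q.1 < q.2)).filter (fun q => ¬ q.2 = 2 * q.1)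
      = ((Icc 1 m) ×ˢ (Icc 1 m)).filter (fun q => q.1 < q.2 ∧ q.2 < 2 * q.1) := by
    rw [Finset.filter_filter, Finset.filter_filter]
    apply Finset.filter_congr
    intro q hq
    simp only [mem_product, mem_Icc] at hq
    constructor <;> intro h <;> [omega; omega]
  have e3 : ((((Icc 1 m) ×ˢ (Icc 1 m)).filter (fun q => q.1 < q.2)).filter
      (fun q => ¬ 2 * q.1 < q.2)).filter (fun q => q.2 = 2 * q.1)
      = ((Icc 1 m) ×ˢ (Icc 1 m)).filter (fun q => q.2 = 2 * q.1) := by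
    rw [Finset.filter_filter, Finset.filter_filter]
    apply Finset.filter_congr
    intro q hq
    simp only [mem_product, mem_Icc] at hq
    constructor <;> intro h <;> omega
  rw [e1, e2, e3]
  ring

private lemma T_eq_2U (m : ℕ) :
    ∑ q ∈ ((Icc 1 m) ×ˢ (Icc 1 m)).filter (fun q => q.1 < q.2),
      m.choose q.2 * (m.choose q.1 + m.choose (q.2 - q.1))
    = 2 * ∑ q ∈ ((Icc 1 m) ×ˢ (Icc 1 m)).filter (fun q => q.1 < q.2),
        m.choose q.1 * m.choose q.2 := by
  have h1 : ∑ q ∈ ((Icc 1 m) ×ˢ (Icc 1 m)).filter (fun q => q.1 < q.2),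
      m.choose q.2 * (m.choose q.1 + m.choose (q.2 - q.1))
      = ∑ q ∈ ((Icc 1 m) ×ˢ (Icc 1 m)).filter (fun q => q.1 < q.2),
          m.choose q.1 * m.choose q.2
        + ∑ q ∈ ((Icc 1 m) ×ˢ (Icc 1 m)).filter (fun q => q.1 < q.2),
          m.choose q.2 * m.choose (q.2 - q.1) := by
    rw [← Finset.sum_add_distrib]
    apply Finset.sum_congr rfl
    intro q _
    ring
  have h2 : ∑ q ∈ ((Icc 1 m) ×ˢ (Icc 1 m)).filter (fun q => q.1 < q.2),
      m.choose q.2 * m.choose (q.2 - q.1)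
      = ∑ q ∈ ((Icc 1 m) ×ˢ (Icc 1 m)).filter (fun q => q.1 < q.2),
          m.choose q.1 * m.choose q.2 := by
    refine Finset.sum_nbij' (fun q => (q.2 - q.1, q.2)) (fun q => (q.2 - q.1, q.2))
      ?_ ?_ ?_ ?_ ?_
    · rintro ⟨a, b⟩ hq
      simp only [mem_filter, mem_product, mem_Icc] at hq ⊢
      omega
    · rintro ⟨a, b⟩ hq
      simp only [mem_filter, mem_product, mem_Icc] at hq ⊢
      omega
    · rintro ⟨a, b⟩ hq
      simp only [mem_filter, mem_product, mem_Icc] at hq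
      dsimp only
      rw [show b - (b - a) = a by omega]
    · rintro ⟨a, b⟩ hq
      simp only [mem_filter, mem_product, mem_Icc] at hq
      dsimp only
      rw [show b - (b - a) = a by omega]
    · rintro ⟨a, b⟩ hq
      simp only [mem_filter, mem_product, mem_Icc] at hq
      dsimp only
      ring
  omega

private lemma U_eval (m : ℕ) :
    2 * (∑ q ∈ ((Icc 1 m) ×ˢ (Icc 1 m)).filter (fun q => q.1 < q.2),
        m.choose q.1 * m.choose q.2)
      + (2 * m).choose m + 2 * 2 ^ m = 2 ^ (2 * m) + 2 := by
  set P0 := (range (m + 1)) ×ˢ (range (m + 1)) with hP0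
  -- total
  have htot : ∑ q ∈ P0, m.choose q.1 * m.choose q.2 = 2 ^ (2 * m) := by
    rw [hP0, Finset.sum_product, ← Finset.sum_mul_sum, Nat.sum_range_choose, ← pow_add, two_mul]
  -- diagonal = central binomial
  have hdiag : ∑ q ∈ P0.filter (fun q => q.1 = q.2), m.choose q.1 * m.choose q.2
      = (2 * m).choose m := by
    have s1 : ∑ q ∈ P0.filter (fun q => q.1 = q.2), m.choose q.1 * m.choose q.2
        = ∑ i ∈ range (m + 1), m.choose i * m.choose i := by
      refine Finset.sum_nbij' (fun q => q.1) (fun i => (i, i)) ?_ ?_ ?_ ?_ ?_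
      · rintro ⟨a, b⟩ hq
        simp only [hP0, mem_filter, mem_product, mem_range] at hq ⊢
        omega
      · intro i hi
        simp only [mem_range] at hi
        simp only [hP0, mem_filter, mem_product, mem_range]
        exact ⟨⟨hi, hi⟩, trivial⟩
      · rintro ⟨a, b⟩ hq
        simp only [hP0, mem_filter, mem_product, mem_range] at hq
        dsimp only
        rw [show a = b from hq.2]
      · intro i hi
        rfl
      · rintro ⟨a, b⟩ hq
        simp only [hP0, mem_filter, mem_product, mem_range] at hq
        dsimp only
        rw [show b = a from hq.2.symm]
    rw [s1, two_mul, Nat.add_choose_eq, Finset.Nat.sum_antidiagonal_eq_sum_range_succ_mk]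
    apply Finset.sum_congr rfl
    intro i hi
    simp only [mem_range] at hi
    rw [Nat.choose_symm (by omega)]
  -- lower = upper by swap
  have hsym : ∑ q ∈ P0.filter (fun q => q.2 < q.1), m.choose q.1 * m.choose q.2
      = ∑ q ∈ P0.filter (fun q => q.1 < q.2), m.choose q.1 * m.choose q.2 := by
    refine Finset.sum_nbij' Prod.swap Prod.swap ?_ ?_ ?_ ?_ ?_
    · rintro ⟨a, b⟩ hq
      simp only [hP0, mem_filter, mem_product, mem_range, Prod.swap_prod_mk] at hq ⊢
      omega
    · rintro ⟨a, b⟩ hq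
      simp only [hP0, mem_filter, mem_product, mem_range, Prod.swap_prod_mk] at hq ⊢
      omega
    · rintro ⟨a, b⟩ _; rfl
    · rintro ⟨a, b⟩ _; rfl
    · rintro ⟨a, b⟩ _
      dsimp only [Prod.swap_prod_mk]
      ring
  -- split P0
  have hsplit : ∑ q ∈ P0.filter (fun q => q.1 < q.2), m.choose q.1 * m.choose q.2
      + ∑ q ∈ P0.filter (fun q => q.1 = q.2), m.choose q.1 * m.choose q.2
      + ∑ q ∈ P0.filter (fun q => q.2 < q.1), m.choose q.1 * m.choose q.2
      = ∑ q ∈ P0, m.choose q.1 * m.choose q.2 := by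
    rw [← Finset.sum_filter_add_sum_filter_not P0 (fun q => q.1 < q.2)]
    rw [← Finset.sum_filter_add_sum_filter_not (P0.filter (fun q => ¬ q.1 < q.2))
      (fun q => q.1 = q.2)]
    have e1 : (P0.filter (fun q => ¬ q.1 < q.2)).filter (fun q => q.1 = q.2)
        = P0.filter (fun q => q.1 = q.2) := by
      rw [Finset.filter_filter]
      apply Finset.filter_congr
      intro q _
      constructor <;> intro h <;> omega
    have e2 : (P0.filter (fun q => ¬ q.1 < q.2)).filter (fun q => ¬ q.1 = q.2)
        = P0.filter (fun q => q.2 < q.1) := by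
      rw [Finset.filter_filter]
      apply Finset.filter_congr
      intro q _
      constructor <;> intro h <;> omega
    rw [e1, e2]
    ring
  -- relate lt-sum over P0 to lt-sum over P
  have hV : ∑ b ∈ Icc 1 m, m.choose b + 1 = 2 ^ m := by
    have hr : range (m + 1) = insert 0 (Icc 1 m) := by
      ext x
      simp only [mem_range, mem_insert, mem_Icc]
      omega
    have := Nat.sum_range_choose m
    rw [hr, Finset.sum_insert (by simp)] at this
    simp only [Nat.choose_zero_right] at this
    omega
  have hrel : ∑ q ∈ P0.filter (fun q => q.1 < q.2), m.choose q.1 * m.choose q.2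
      = ∑ q ∈ ((Icc 1 m) ×ˢ (Icc 1 m)).filter (fun q => q.1 < q.2),
          m.choose q.1 * m.choose q.2
        + ∑ b ∈ Icc 1 m, m.choose b := by
    rw [← Finset.sum_filter_add_sum_filter_not (P0.filter (fun q => q.1 < q.2))
      (fun q => 1 ≤ q.1)]
    have e1 : (P0.filter (fun q => q.1 < q.2)).filter (fun q => 1 ≤ q.1)
        = ((Icc 1 m) ×ˢ (Icc 1 m)).filter (fun q => q.1 < q.2) := by
      ext q
      simp only [hP0, Finset.filter_filter, mem_filter, mem_product, mem_range, mem_Icc]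
      omega
    have e2 : ∑ q ∈ (P0.filter (fun q => q.1 < q.2)).filter (fun q => ¬ 1 ≤ q.1),
        m.choose q.1 * m.choose q.2 = ∑ b ∈ Icc 1 m, m.choose b := by
      refine Finset.sum_nbij' (fun q => q.2) (fun b => (0, b)) ?_ ?_ ?_ ?_ ?_
      · rintro ⟨a, b⟩ hq
        simp only [hP0, mem_filter, mem_product, mem_range, mem_Icc] at hq ⊢
        omega
      · intro b hb
        simp only [mem_Icc] at hb
        simp only [hP0, mem_filter, mem_product, mem_range]
        refine ⟨⟨⟨by omega, by omega⟩, by omega⟩, by omega⟩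
      · rintro ⟨a, b⟩ hq
        simp only [hP0, mem_filter, mem_product, mem_range, mem_Icc] at hq
        dsimp only
        rw [show (0 : ℕ) = a by omega]
      · intro b hb
        rfl
      · rintro ⟨a, b⟩ hq
        simp only [hP0, mem_filter, mem_product, mem_range, mem_Icc] at hq
        dsimp only
        rw [show a = 0 by omega, Nat.choose_zero_right, one_mul]
    rw [e1, e2]
  omega

private lemma cast_final (m X E : ℕ)
    (h : 2 * X + 2 * E + (2 * m).choose m + 2 * 2 ^ m = 2 ^ (2 * m) + 2) (hm : 1 ≤ m) :
    (X : ℚ) = 2 ^ (2 * m - 1) - 2 ^ m - ((2 * m).choose m : ℚ) / 2 - (E : ℚ) + 1 := by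
  have h2 : (2 : ℚ) ^ (2 * m - 1) * 2 = 2 ^ (2 * m) := by
    rw [← pow_succ]
    congr 1
    omega
  have hc := congrArg (fun n : ℕ => (n : ℚ)) h
  push_cast at hc
  linarith

/-- Identities for fractions of the Farey subsequence `𝓕(𝔹(2m), m)`.
The outer sums range over reduced fractions `h/k` with `k ≤ 2m`, `h ≤ m`,
`k - h ≤ m`, lying in `(0/1, 1/3)`, `(1/3, 1/2)`, `(1/2, 2/3)` and `(2/3, 1/1)`,
respectively; each of the four sums equals
`2^(2m-1) - 2^m - (1/2)·C(2m,m) - ∑_{1 ≤ t ≤ ⌊m/2⌋} C(m,2t)·C(m,t) + 1`. -/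
theorem fareyB2_third_binomial_identities (m : ℕ) (hm : 1 < m) :
    ((∑ p ∈ (Finset.Icc 1 (2 * m) ×ˢ Finset.Icc 1 (2 * m)).filter
        (fun p => 3 * p.1 < p.2 ∧ Nat.Coprime p.1 p.2 ∧ p.1 ≤ m ∧ p.2 - p.1 ≤ m),
      ∑ s ∈ Finset.Icc 1 (m / (p.2 - p.1)),
        (m.choose (s * (p.2 - p.1))) *
          ((m.choose (s * p.1)) + (m.choose (s * (p.2 - 2 * p.1)))) : ℕ) : ℚ)
      = 2 ^ (2 * m - 1) - 2 ^ m - ((2 * m).choose m : ℚ) / 2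
          - (∑ t ∈ Finset.Icc 1 (m / 2), (m.choose (2 * t)) * (m.choose t) : ℕ) + 1 ∧
    ((∑ p ∈ (Finset.Icc 1 (2 * m) ×ˢ Finset.Icc 1 (2 * m)).filter
        (fun p => p.2 < 3 * p.1 ∧ 2 * p.1 < p.2 ∧ Nat.Coprime p.1 p.2 ∧ p.1 ≤ m ∧ p.2 - p.1 ≤ m),
      ∑ s ∈ Finset.Icc 1 (m / (p.2 - p.1)),
        (m.choose (s * (p.2 - p.1))) *
          ((m.choose (s * p.1)) + (m.choose (s * (p.2 - 2 * p.1)))) : ℕ) : ℚ)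
      = 2 ^ (2 * m - 1) - 2 ^ m - ((2 * m).choose m : ℚ) / 2
          - (∑ t ∈ Finset.Icc 1 (m / 2), (m.choose (2 * t)) * (m.choose t) : ℕ) + 1 ∧
    ((∑ p ∈ (Finset.Icc 1 (2 * m) ×ˢ Finset.Icc 1 (2 * m)).filter
        (fun p => p.2 < 2 * p.1 ∧ 3 * p.1 < 2 * p.2 ∧ Nat.Coprime p.1 p.2 ∧
          p.1 ≤ m ∧ p.2 - p.1 ≤ m),
      ∑ s ∈ Finset.Icc 1 (m / p.1),
        (m.choose (s * p.1)) *
          ((m.choose (s * (p.2 - p.1))) + (m.choose (s * (2 * p.1 - p.2)))) : ℕ) : ℚ)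
      = 2 ^ (2 * m - 1) - 2 ^ m - ((2 * m).choose m : ℚ) / 2
          - (∑ t ∈ Finset.Icc 1 (m / 2), (m.choose (2 * t)) * (m.choose t) : ℕ) + 1 ∧
    ((∑ p ∈ (Finset.Icc 1 (2 * m) ×ˢ Finset.Icc 1 (2 * m)).filter
        (fun p => 2 * p.2 < 3 * p.1 ∧ p.1 < p.2 ∧ Nat.Coprime p.1 p.2 ∧
          p.1 ≤ m ∧ p.2 - p.1 ≤ m),
      ∑ s ∈ Finset.Icc 1 (m / p.1),
        (m.choose (s * p.1)) *
          ((m.choose (s * (p.2 - p.1))) + (m.choose (s * (2 * p.1 - p.2)))) : ℕ) : ℚ)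
      = 2 ^ (2 * m - 1) - 2 ^ m - ((2 * m).choose m : ℚ) / 2
          - (∑ t ∈ Finset.Icc 1 (m / 2), (m.choose (2 * t)) * (m.choose t) : ℕ) + 1 := by
  -- numeric keys
  have key : 2 * (∑ q ∈ ((Icc 1 m) ×ˢ (Icc 1 m)).filter (fun q => 2 * q.1 < q.2),
        m.choose q.2 * (m.choose q.1 + m.choose (q.2 - q.1)))
      + 2 * (∑ t ∈ Icc 1 (m / 2), m.choose (2 * t) * m.choose t)
      + (2 * m).choose m + 2 * 2 ^ m = 2 ^ (2 * m) + 2 := by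
    have h1 := split_sum m
    have h2 := Sb_eq_Sa m
    have h3 := diag_sum m
    have h4 := T_eq_2U m
    have h5 := U_eval m
    omega
  have keyB : 2 * (∑ q ∈ ((Icc 1 m) ×ˢ (Icc 1 m)).filter (fun q => q.1 < q.2 ∧ q.2 < 2 * q.1),
        m.choose q.2 * (m.choose q.1 + m.choose (q.2 - q.1)))
      + 2 * (∑ t ∈ Icc 1 (m / 2), m.choose (2 * t) * m.choose t)
      + (2 * m).choose m + 2 * 2 ^ m = 2 ^ (2 * m) + 2 := by
    rw [Sb_eq_Sa m]
    exact key
  -- case (a)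
  have hcoreA := farey_core m (fun x y => 2 * x < y)
      (fun s h d hs => by
        show 2 * (s * h) < s * d ↔ 2 * h < d
        rw [show 2 * (s * h) = s * (2 * h) by ring, mul_lt_mul_iff_right₀ hs])
      Prod.snd (Or.inr rfl)
      (fun h d hd => (max_eq_right (by omega : h ≤ d)).symm)
      (fun a b => m.choose b * (m.choose a + m.choose (b - a)))
  have hA : (∑ p ∈ (Finset.Icc 1 (2 * m) ×ˢ Finset.Icc 1 (2 * m)).filter
        (fun p => 3 * p.1 < p.2 ∧ Nat.Coprime p.1 p.2 ∧ p.1 ≤ m ∧ p.2 - p.1 ≤ m),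
      ∑ s ∈ Finset.Icc 1 (m / (p.2 - p.1)),
        (m.choose (s * (p.2 - p.1))) *
          ((m.choose (s * p.1)) + (m.choose (s * (p.2 - 2 * p.1)))))
      = ∑ q ∈ ((Icc 1 m) ×ˢ (Icc 1 m)).filter (fun q => 2 * q.1 < q.2),
          m.choose q.2 * (m.choose q.1 + m.choose (q.2 - q.1)) := by
    rw [← hcoreA]
    refine Finset.sum_congr ?_ ?_
    · ext p
      simp only [mem_filter, mem_product, mem_Icc]
      constructor
      · rintro ⟨hmem, h1, h2, h3, h4⟩
        exact ⟨hmem, by omega, by omega, h2, h3, h4⟩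
      · rintro ⟨hmem, h1, h2, h3, h4, h5⟩
        exact ⟨hmem, by omega, h3, h4, h5⟩
    · intro p hp
      refine Finset.sum_congr rfl ?_
      intro s _
      have harg : s * (p.2 - 2 * p.1) = s * (p.2 - p.1) - s * p.1 := by
        rw [Nat.mul_sub, Nat.mul_sub]
        have e1 : s * (2 * p.1) = s * p.1 + s * p.1 := by ring
        omega
      rw [harg]
  -- case (b)
  have hcoreB := farey_core m (fun x y => x < y ∧ y < 2 * x)
      (fun s h d hs => by
        show (s * h < s * d ∧ s * d < 2 * (s * h)) ↔ (h < d ∧ d < 2 * h)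
        rw [show 2 * (s * h) = s * (2 * h) by ring, mul_lt_mul_iff_right₀ hs, mul_lt_mul_iff_right₀ hs])
      Prod.snd (Or.inr rfl)
      (fun h d hd => (max_eq_right (by omega : h ≤ d)).symm)
      (fun a b => m.choose b * (m.choose a + m.choose (b - a)))
  have hB : (∑ p ∈ (Finset.Icc 1 (2 * m) ×ˢ Finset.Icc 1 (2 * m)).filter
        (fun p => p.2 < 3 * p.1 ∧ 2 * p.1 < p.2 ∧ Nat.Coprime p.1 p.2 ∧ p.1 ≤ m ∧ p.2 - p.1 ≤ m),
      ∑ s ∈ Finset.Icc 1 (m / (p.2 - p.1)),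
        (m.choose (s * (p.2 - p.1))) *
          ((m.choose (s * p.1)) + (m.choose (s * (p.2 - 2 * p.1)))))
      = ∑ q ∈ ((Icc 1 m) ×ˢ (Icc 1 m)).filter (fun q => q.1 < q.2 ∧ q.2 < 2 * q.1),
          m.choose q.2 * (m.choose q.1 + m.choose (q.2 - q.1)) := by
    rw [← hcoreB]
    refine Finset.sum_congr ?_ ?_
    · ext p
      simp only [mem_filter, mem_product, mem_Icc]
      constructor
      · rintro ⟨hmem, h1, h2, h3, h4, h5⟩
        exact ⟨hmem, ⟨by omega, by omega⟩, by omega, h3, h4, h5⟩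
      · rintro ⟨hmem, ⟨h1a, h1b⟩, h2, h3, h4, h5⟩
        exact ⟨hmem, by omega, by omega, h3, h4, h5⟩
    · intro p hp
      refine Finset.sum_congr rfl ?_
      intro s _
      have harg : s * (p.2 - 2 * p.1) = s * (p.2 - p.1) - s * p.1 := by
        rw [Nat.mul_sub, Nat.mul_sub]
        have e1 : s * (2 * p.1) = s * p.1 + s * p.1 := by ring
        omega
      rw [harg]
  -- case (c)
  have hcoreC := farey_core m (fun x y => y < x ∧ x < 2 * y)
      (fun s h d hs => by
        show (s * d < s * h ∧ s * h < 2 * (s * d)) ↔ (d < h ∧ h < 2 * d)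
        rw [show 2 * (s * d) = s * (2 * d) by ring, mul_lt_mul_iff_right₀ hs, mul_lt_mul_iff_right₀ hs])
      Prod.fst (Or.inl rfl)
      (fun h d hd => (max_eq_left (by omega : d ≤ h)).symm)
      (fun a b => m.choose a * (m.choose b + m.choose (a - b)))
  have hCswap : (∑ q ∈ ((Icc 1 m) ×ˢ (Icc 1 m)).filter (fun q => q.2 < q.1 ∧ q.1 < 2 * q.2),
        m.choose q.1 * (m.choose q.2 + m.choose (q.1 - q.2)))
      = ∑ q ∈ ((Icc 1 m) ×ˢ (Icc 1 m)).filter (fun q => q.1 < q.2 ∧ q.2 < 2 * q.1),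
          m.choose q.2 * (m.choose q.1 + m.choose (q.2 - q.1)) :=
    swap_sum m (fun x y => y < x ∧ x < 2 * y)
      (fun x y => m.choose x * (m.choose y + m.choose (x - y)))
  have hC : (∑ p ∈ (Finset.Icc 1 (2 * m) ×ˢ Finset.Icc 1 (2 * m)).filter
        (fun p => p.2 < 2 * p.1 ∧ 3 * p.1 < 2 * p.2 ∧ Nat.Coprime p.1 p.2 ∧
          p.1 ≤ m ∧ p.2 - p.1 ≤ m),
      ∑ s ∈ Finset.Icc 1 (m / p.1),
        (m.choose (s * p.1)) *
          ((m.choose (s * (p.2 - p.1))) + (m.choose (s * (2 * p.1 - p.2)))))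
      = ∑ q ∈ ((Icc 1 m) ×ˢ (Icc 1 m)).filter (fun q => q.2 < q.1 ∧ q.1 < 2 * q.2),
          m.choose q.1 * (m.choose q.2 + m.choose (q.1 - q.2)) := by
    rw [← hcoreC]
    refine Finset.sum_congr ?_ ?_
    · ext p
      simp only [mem_filter, mem_product, mem_Icc]
      constructor
      · rintro ⟨hmem, h1, h2, h3, h4, h5⟩
        exact ⟨hmem, ⟨by omega, by omega⟩, by omega, h3, h4, h5⟩
      · rintro ⟨hmem, ⟨h1a, h1b⟩, h2, h3, h4, h5⟩
        exact ⟨hmem, by omega, by omega, h3, h4, h5⟩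
    · intro p hp
      simp only [mem_filter, mem_product, mem_Icc] at hp
      have hlt : p.1 < p.2 := hp.2.2.1
      refine Finset.sum_congr rfl ?_
      intro s _
      have harg : s * (2 * p.1 - p.2) = s * p.1 - s * (p.2 - p.1) := by
        rw [Nat.mul_sub, Nat.mul_sub]
        have e1 : s * (2 * p.1) = s * p.1 + s * p.1 := by ring
        have e2 : s * p.1 ≤ s * p.2 := Nat.mul_le_mul (le_refl s) (by omega)
        omega
      rw [harg]
  -- case (d)
  have hcoreD := farey_core m (fun x y => 2 * y < x)
      (fun s h d hs => by
        show 2 * (s * d) < s * h ↔ 2 * d < h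
        rw [show 2 * (s * d) = s * (2 * d) by ring, mul_lt_mul_iff_right₀ hs])
      Prod.fst (Or.inl rfl)
      (fun h d hd => (max_eq_left (by omega : d ≤ h)).symm)
      (fun a b => m.choose a * (m.choose b + m.choose (a - b)))
  have hDswap : (∑ q ∈ ((Icc 1 m) ×ˢ (Icc 1 m)).filter (fun q => 2 * q.2 < q.1),
        m.choose q.1 * (m.choose q.2 + m.choose (q.1 - q.2)))
      = ∑ q ∈ ((Icc 1 m) ×ˢ (Icc 1 m)).filter (fun q => 2 * q.1 < q.2),
          m.choose q.2 * (m.choose q.1 + m.choose (q.2 - q.1)) :=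
    swap_sum m (fun x y => 2 * y < x)
      (fun x y => m.choose x * (m.choose y + m.choose (x - y)))
  have hD : (∑ p ∈ (Finset.Icc 1 (2 * m) ×ˢ Finset.Icc 1 (2 * m)).filter
        (fun p => 2 * p.2 < 3 * p.1 ∧ p.1 < p.2 ∧ Nat.Coprime p.1 p.2 ∧
          p.1 ≤ m ∧ p.2 - p.1 ≤ m),
      ∑ s ∈ Finset.Icc 1 (m / p.1),
        (m.choose (s * p.1)) *
          ((m.choose (s * (p.2 - p.1))) + (m.choose (s * (2 * p.1 - p.2)))))
      = ∑ q ∈ ((Icc 1 m) ×ˢ (Icc 1 m)).filter (fun q => 2 * q.2 < q.1),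
          m.choose q.1 * (m.choose q.2 + m.choose (q.1 - q.2)) := by
    rw [← hcoreD]
    refine Finset.sum_congr ?_ ?_
    · ext p
      simp only [mem_filter, mem_product, mem_Icc]
      constructor
      · rintro ⟨hmem, h1, h2, h3, h4, h5⟩
        exact ⟨hmem, by omega, h2, h3, h4, h5⟩
      · rintro ⟨hmem, h1, h2, h3, h4, h5⟩
        exact ⟨hmem, by omega, h2, h3, h4, h5⟩
    · intro p hp
      simp only [mem_filter, mem_product, mem_Icc] at hp
      have hlt : p.1 < p.2 := hp.2.2.1
      refine Finset.sum_congr rfl ?_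
      intro s _
      have harg : s * (2 * p.1 - p.2) = s * p.1 - s * (p.2 - p.1) := by
        rw [Nat.mul_sub, Nat.mul_sub]
        have e1 : s * (2 * p.1) = s * p.1 + s * p.1 := by ring
        have e2 : s * p.1 ≤ s * p.2 := Nat.mul_le_mul (le_refl s) (by omega)
        omega
      rw [harg]
  refine ⟨?_, ?_, ?_, ?_⟩
  · rw [hA]
    exact cast_final m _ _ key (by omega)
  · rw [hB]
    exact cast_final m _ _ keyB (by omega)
  · rw [hC, hCswap]
    exact cast_final m _ _ keyB (by omega)
  · rw [hD, hDswap]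
    exact cast_final m _ _ key (by omega)
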